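/- Fix a > 0, θ > 0, σ ∈ (0,1) and set Φ(u) = exp(−(a/σ)(u+θ)^σ) for u > 0. For integers n ≥ 1, k ≥ 0 define D(n,k) = ∫_0^∞ u^{n−1}(u+θ)^{kσ−n} Φ(u) du and N(n,k) = ∫_0^∞ u^{n}(u+θ)^{(k+1)σ−(n+1)} Φ(u) du (finite, positive Lebesgue integrals). If (k_n) is a sequence of integers with 1 ≤ k_n ≤ n and k_n/n → 0, then (a/n) · N(n,k_n)/D(n,k_n) → 0 as n → ∞. -/

import Mathlib

open MeasureTheory Real Set Filter

open scoped ENNReal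

set_option maxHeartbeats 1000000

/-- `D(n,k) = ∫_0^∞ u^{n−1}(u+θ)^{kσ−n} exp(−(a/σ)(u+θ)^σ) du`. -/
noncomputable def Dint (a θ σ : ℝ) (n k : ℕ) : ℝ :=
  ∫ u in Ioi (0:ℝ),
    u ^ (n - 1) * (u + θ) ^ ((k : ℝ) * σ - n) * Real.exp (-(a / σ) * (u + θ) ^ σ)

/-- `N(n,k) = ∫_0^∞ u^{n}(u+θ)^{(k+1)σ−(n+1)} exp(−(a/σ)(u+θ)^σ) du`. -/
noncomputable def Nint (a θ σ : ℝ) (n k : ℕ) : ℝ :=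
  ∫ u in Ioi (0:ℝ),
    u ^ n * (u + θ) ^ (((k : ℝ) + 1) * σ - ((n : ℝ) + 1)) * Real.exp (-(a / σ) * (u + θ) ^ σ)

lemma aux_tendsto {c σ : ℝ} (hc : 0 < c) (hσ : 0 < σ) (s : ℝ) :
    Tendsto (fun v : ℝ => v ^ s * Real.exp (-c * v ^ σ)) atTop (nhds 0) := by
  have h := (tendsto_rpow_mul_exp_neg_mul_atTop_nhds_zero (s / σ) c hc).comp
    (tendsto_rpow_atTop hσ)
  apply h.congr'
  filter_upwards [eventually_gt_atTop (0:ℝ)] with v hv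
  simp only [Function.comp]
  rw [← Real.rpow_mul hv.le]
  congr 2
  field_simp

lemma aux_cont {c σ θ : ℝ} (hθ : 0 < θ) (m : ℕ) (p : ℝ) :
    ContinuousOn (fun u : ℝ => u ^ m * (u + θ) ^ p * Real.exp (-c * (u + θ) ^ σ)) (Ici 0) := by
  intro u hu
  have hpos : u + θ ≠ 0 := by simp only [mem_Ici] at hu; positivity
  have hadd : ContinuousAt (fun x : ℝ => x + θ) u := by fun_prop
  have h1 : ContinuousAt (fun x : ℝ => (x + θ) ^ p) u :=
    hadd.rpow_const (Or.inl hpos)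
  have h2 : ContinuousAt (fun x : ℝ => (x + θ) ^ σ) u :=
    hadd.rpow_const (Or.inl hpos)
  exact (((continuous_pow m).continuousAt.mul h1).mul
    (Real.continuous_exp.continuousAt.comp (h2.const_mul (-c)))).continuousWithinAt

lemma aux_integrable {a σ θ : ℝ} (ha : 0 < a) (hθ : 0 < θ) (hσ : 0 < σ) (hσ1 : σ < 1)
    (m : ℕ) (p : ℝ) :
    IntegrableOn (fun u : ℝ => u ^ m * (u + θ) ^ p * Real.exp (-(a/σ) * (u + θ) ^ σ)) (Ioi 0) := by
  have hc : 0 < a / σ := by positivity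
  have hcont := aux_cont (c := a/σ) (σ := σ) hθ m p
  have hnn : ∀ u : ℝ, 0 ≤ u → 0 ≤ u ^ m * (u + θ) ^ p * Real.exp (-(a/σ) * (u + θ) ^ σ) := by
    intro u hu; positivity
  -- big O bound
  have hO : (fun u : ℝ => u ^ m * (u + θ) ^ p * Real.exp (-(a/σ) * (u + θ) ^ σ))
      =O[atTop] fun x : ℝ => x ^ (-2 : ℝ) := by
    have hten : Tendsto (fun u : ℝ =>
        (u + θ) ^ ((m : ℝ) + 2 + p) * Real.exp (-(a/σ) * (u + θ) ^ σ)) atTop (nhds 0) :=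
      (aux_tendsto hc hσ ((m : ℝ) + 2 + p)).comp (tendsto_atTop_add_const_right _ θ tendsto_id)
    rw [Asymptotics.isBigO_iff]
    refine ⟨1, ?_⟩
    filter_upwards [eventually_ge_atTop (1:ℝ), hten.eventually_le_const one_pos] with u hu1 hb
    have hu0 : (0:ℝ) < u := lt_of_lt_of_le one_pos hu1
    have huθ : (0:ℝ) < u + θ := by linarith
    have h1 : u ^ m * (u + θ) ^ p * Real.exp (-(a/σ) * (u + θ) ^ σ) * u ^ (2:ℝ)
        ≤ (u + θ) ^ ((m : ℝ) + 2 + p) * Real.exp (-(a/σ) * (u + θ) ^ σ) := by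
      have e1 : u ^ m * u ^ (2:ℝ) ≤ (u + θ) ^ ((m:ℝ) + 2) := by
        rw [← Real.rpow_natCast u m, ← Real.rpow_add hu0]
        exact Real.rpow_le_rpow hu0.le (by linarith) (by positivity)
      have e2 : (u + θ) ^ ((m:ℝ) + 2) * (u + θ) ^ p = (u + θ) ^ ((m:ℝ) + 2 + p) :=
        (Real.rpow_add huθ _ _).symm
      calc u ^ m * (u + θ) ^ p * Real.exp (-(a/σ) * (u + θ) ^ σ) * u ^ (2:ℝ)
          = (u ^ m * u ^ (2:ℝ)) * (u + θ) ^ p * Real.exp (-(a/σ) * (u + θ) ^ σ) := by ring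
        _ ≤ (u + θ) ^ ((m:ℝ) + 2) * (u + θ) ^ p * Real.exp (-(a/σ) * (u + θ) ^ σ) := by
            apply mul_le_mul_of_nonneg_right _ (Real.exp_pos _).le
            exact mul_le_mul_of_nonneg_right e1 (by positivity)
        _ = (u + θ) ^ ((m:ℝ) + 2 + p) * Real.exp (-(a/σ) * (u + θ) ^ σ) := by rw [e2]
    rw [Real.norm_eq_abs, Real.norm_eq_abs, abs_of_nonneg (hnn u hu0.le),
      abs_of_nonneg (Real.rpow_nonneg hu0.le _), one_mul]
    rw [Real.rpow_neg hu0.le]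
    rw [show ((u ^ (2:ℝ))⁻¹ : ℝ) = 1 / u ^ (2:ℝ) by rw [one_div],
      le_div_iff₀ (by positivity : (0:ℝ) < u ^ (2:ℝ))]
    exact h1.trans hb
  have := (hcont.locallyIntegrableOn measurableSet_Ici).integrableOn_of_isBigO_atTop hO
    ⟨Ioi 1, Ioi_mem_atTop 1, integrableOn_Ioi_rpow_of_lt (by norm_num) one_pos⟩
  exact Iff.mp integrableOn_Ici_iff_integrableOn_Ioi this

lemma aux_integrable' {a σ θ : ℝ} (ha : 0 < a) (hθ : 0 < θ) (hσ : 0 < σ) (hσ1 : σ < 1)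
    {T : ℝ} (hT : 0 ≤ T) (p : ℝ) :
    IntegrableOn (fun u : ℝ => (u + θ) ^ p * Real.exp (-(a/σ) * (u + θ) ^ σ)) (Ioi T) := by
  have h := ((aux_integrable ha hθ hσ hσ1 0 p).mono_set (Ioi_subset_Ioi hT))
  apply h.congr_fun _ measurableSet_Ioi
  intro u _
  simp

lemma aux_ibp {a σ θ : ℝ} (ha : 0 < a) (hθ : 0 < θ) (hσ : 0 < σ) (hσ1 : σ < 1)
    {T : ℝ} (hT : 0 ≤ T) {q : ℝ} (hq : 0 < q) :
    a * ∫ u in Ioi T, (u + θ) ^ (q + σ - 1) * Real.exp (-(a/σ) * (u + θ) ^ σ)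
      = q * (∫ u in Ioi T, (u + θ) ^ (q - 1) * Real.exp (-(a/σ) * (u + θ) ^ σ))
        + (T + θ) ^ q * Real.exp (-(a/σ) * (T + θ) ^ σ) := by
  set E : ℝ → ℝ := fun u => Real.exp (-(a/σ) * (u + θ) ^ σ) with hE
  set F : ℝ → ℝ := fun u => -((u + θ) ^ q * E u) with hF
  set F' : ℝ → ℝ := fun u => a * ((u + θ) ^ (q + σ - 1) * E u) - q * ((u + θ) ^ (q - 1) * E u)
    with hF'
  have hint1 := aux_integrable' ha hθ hσ hσ1 hT (q + σ - 1)
  have hint2 := aux_integrable' ha hθ hσ hσ1 hT (q - 1)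
  have hderiv : ∀ u ∈ Ici T, HasDerivAt F (F' u) u := by
    intro u hu
    have huθ : 0 < u + θ := by
      have : T ≤ u := hu
      linarith
    have hadd : HasDerivAt (fun x : ℝ => x + θ) 1 u := (hasDerivAt_id u).add_const θ
    have h1 : HasDerivAt (fun x : ℝ => (x + θ) ^ q) (q * (u + θ) ^ (q - 1)) u := by
      have := (Real.hasDerivAt_rpow_const (x := u + θ) (p := q) (Or.inl huθ.ne')).comp u hadd
      simpa [Function.comp_def] using this
    have h2 : HasDerivAt (fun x : ℝ => (x + θ) ^ σ) (σ * (u + θ) ^ (σ - 1)) u := by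
      have := (Real.hasDerivAt_rpow_const (x := u + θ) (p := σ) (Or.inl huθ.ne')).comp u hadd
      simpa [Function.comp_def] using this
    have h3 : HasDerivAt (fun x : ℝ => Real.exp (-(a/σ) * (x + θ) ^ σ))
        (Real.exp (-(a/σ) * (u + θ) ^ σ) * (-(a/σ) * (σ * (u + θ) ^ (σ - 1)))) u :=
      (h2.const_mul (-(a/σ))).exp
    have h4 := (h1.mul h3).neg
    convert h4 using 1
    · rfl
    · rfl
    · rfl
    have e1 : (u + θ) ^ (q + σ - 1) = (u + θ) ^ q * (u + θ) ^ (σ - 1) := by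
      rw [← Real.rpow_add huθ]; ring_nf
    simp only [hF', hE, e1]
    field_simp
    ring
  have htend : Tendsto F atTop (nhds 0) := by
    have hc : 0 < a / σ := by positivity
    have h := ((aux_tendsto hc hσ q).comp (tendsto_atTop_add_const_right atTop θ tendsto_id)).neg
    rw [neg_zero] at h
    exact h.congr (fun u => by simp [hF, hE, Function.comp])
  have hF'int : IntegrableOn F' (Ioi T) := (hint1.const_mul a).sub (hint2.const_mul q)
  have key := integral_Ioi_of_hasDerivAt_of_tendsto' hderiv hF'int htend
  have hsplit : ∫ u in Ioi T, F' u
      = a * (∫ u in Ioi T, (u + θ) ^ (q + σ - 1) * E u)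
        - q * (∫ u in Ioi T, (u + θ) ^ (q - 1) * E u) := by
    rw [hF']
    rw [integral_sub (hint1.const_mul a) (hint2.const_mul q),
      integral_const_mul, integral_const_mul]
  rw [hsplit] at key
  simp only [hF] at key
  linarith [key]

lemma aux_Dpos {a θ σ : ℝ} (ha : 0 < a) (hθ : 0 < θ) (hσ : 0 < σ) (hσ1 : σ < 1)
    (n k : ℕ) : 0 < Dint a θ σ n k := by
  have hint := aux_integrable ha hθ hσ hσ1 (n-1) ((k:ℝ) * σ - (n:ℝ))
  rw [Dint]
  set f : ℝ → ℝ := fun u => u ^ (n-1) * (u + θ) ^ ((k:ℝ) * σ - (n:ℝ))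
    * Real.exp (-(a/σ) * (u + θ) ^ σ) with hf
  have hnn : 0 ≤ᵐ[volume.restrict (Ioi (0:ℝ))] f := by
    filter_upwards [ae_restrict_mem measurableSet_Ioi] with u hu
    have hu0 : (0:ℝ) < u := hu
    have : (0:ℝ) < u + θ := by linarith
    simp only [hf]
    positivity
  rw [setIntegral_pos_iff_support_of_nonneg_ae hnn hint]
  have hsub : Ioi (0:ℝ) ⊆ Function.support f ∩ Ioi 0 := by
    intro u hu
    have hu0 : (0:ℝ) < u := hu
    have huθ : (0:ℝ) < u + θ := by linarith
    refine ⟨?_, hu⟩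
    simp only [Function.mem_support, hf]
    positivity
  calc (0:ℝ≥0∞) < volume (Ioi (0:ℝ)) := by simp
    _ ≤ volume (Function.support f ∩ Ioi 0) := measure_mono hsub

lemma aux_key {a θ σ : ℝ} (ha : 0 < a) (hθ : 0 < θ) (hσ : 0 < σ) (hσ1 : σ < 1)
    (n k : ℕ) (hn : 1 ≤ n) (hk1 : 1 ≤ k) (hkn : k ≤ n) :
    a * Nint a θ σ n k ≤
      ((a + σ * 2 ^ (1/σ) * Real.exp (a/σ) * Real.exp θ) * ((n:ℝ) + θ) ^ σ
        + σ * (k:ℝ) * Real.exp θ) * Dint a θ σ n k := by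
  have hc : 0 < a / σ := by positivity
  set T : ℝ := (n : ℝ) with hTdef
  have hT1 : (1:ℝ) ≤ T := by rw [hTdef]; exact_mod_cast hn
  have hT0 : (0:ℝ) ≤ T := by linarith
  have hTθ : (0:ℝ) < T + θ := by linarith
  set q : ℝ := (k : ℝ) * σ with hqdef
  have hq : 0 < q := by
    have : (1:ℝ) ≤ (k:ℝ) := by exact_mod_cast hk1
    nlinarith
  set τ : ℝ := (T + θ) ^ σ with hτdef
  have hτ1 : (1:ℝ) ≤ τ := Real.one_le_rpow (by linarith) hσ.le
  have hτ0 : (0:ℝ) < τ := by linarith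
  set E : ℝ → ℝ := fun u => Real.exp (-(a/σ) * (u + θ) ^ σ) with hE
  set g : ℝ → ℝ := fun u => u ^ n * (u + θ) ^ (((k : ℝ) + 1) * σ - ((n : ℝ) + 1)) * E u with hg
  set h : ℝ → ℝ := fun u => u ^ (n-1) * (u + θ) ^ ((k : ℝ) * σ - (n:ℝ)) * E u with hh
  set φ : ℝ → ℝ := fun u => (u + θ) ^ (q + σ - 1) * E u with hφ
  set ψ : ℝ → ℝ := fun u => (u + θ) ^ (q - 1) * E u with hψ
  have hgint : IntegrableOn g (Ioi 0) := aux_integrable ha hθ hσ hσ1 n _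
  have hhint : IntegrableOn h (Ioi 0) := aux_integrable ha hθ hσ hσ1 (n-1) _
  have hφint : IntegrableOn φ (Ioi T) := aux_integrable' ha hθ hσ hσ1 hT0 _
  have hψint : IntegrableOn ψ (Ioi T) := aux_integrable' ha hθ hσ hσ1 hT0 _
  have hEpos : ∀ u : ℝ, 0 < E u := fun u => Real.exp_pos _
  have hhnn : ∀ u ∈ Ioi (0:ℝ), 0 ≤ h u := by
    intro u hu
    have hu0 : (0:ℝ) < u := hu
    have : (0:ℝ) < u + θ := by linarith
    simp only [hh]
    positivity
  -- nonnegativity of integrals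
  have hDnn : 0 ≤ Dint a θ σ n k := setIntegral_nonneg measurableSet_Ioi hhnn
  have hBnn : 0 ≤ ∫ u in Ioi T, ψ u := by
    apply setIntegral_nonneg measurableSet_Ioi
    intro u hu
    have : (0:ℝ) < u + θ := by have : T < u := hu; linarith
    simp only [hψ]
    positivity
  set B : ℝ := ∫ u in Ioi T, ψ u with hBdef
  set D : ℝ := Dint a θ σ n k with hDdef
  have hDh : D = ∫ u in Ioi 0, h u := rfl
  -- Step 2 : Nint ≤ τ * D + Tail
  have step2 : Nint a θ σ n k ≤ τ * D + ∫ u in Ioi T, φ u := by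
    have hMint : Integrable (fun u => τ * h u + (Ioi T).indicator φ u)
        (volume.restrict (Ioi (0:ℝ))) := by
      apply Integrable.add (hhint.const_mul τ)
      exact ((hφint.integrable_indicator measurableSet_Ioi)).integrableOn
    have hgnn : 0 ≤ᵐ[volume.restrict (Ioi (0:ℝ))] g := by
      filter_upwards [ae_restrict_mem measurableSet_Ioi] with u hu
      have hu0 : (0:ℝ) < u := hu
      have : (0:ℝ) < u + θ := by linarith
      simp only [hg]
      positivity
    have hle : g ≤ᵐ[volume.restrict (Ioi (0:ℝ))]
        fun u => τ * h u + (Ioi T).indicator φ u := by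
      filter_upwards [ae_restrict_mem measurableSet_Ioi] with u hu
      have hu0 : (0:ℝ) < u := hu
      have huθ : (0:ℝ) < u + θ := by linarith
      by_cases hcase : u ≤ T
      · -- g u ≤ τ * h u
        have hind : (Ioi T).indicator φ u = 0 := by
          apply indicator_of_notMem
          simpa using hcase
        rw [hind, add_zero]
        have hexp : ((k:ℝ) + 1) * σ - ((n:ℝ) + 1)
            = ((k:ℝ) * σ - (n:ℝ)) + σ + (-1) := by ring
        have hupow : u ^ n = u ^ (n-1) * u := by
          conv_lhs => rw [show n = (n-1)+1 from (Nat.succ_pred_eq_of_pos hn).symm]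
          rw [pow_succ]
        have hrw : g u = h u * (u * (u + θ) ^ (-1:ℝ) * (u + θ) ^ σ) := by
          simp only [hg, hh, hexp, Real.rpow_add huθ, hupow]
          ring
        rw [hrw]
        have hfac : u * (u + θ) ^ (-1:ℝ) * (u + θ) ^ σ ≤ 1 * τ := by
          apply mul_le_mul _ _ (by positivity) (by norm_num)
          · rw [Real.rpow_neg_one]
            rw [mul_inv_le_iff₀ huθ, one_mul]
            linarith
          · exact Real.rpow_le_rpow huθ.le (by linarith) hσ.le
        rw [one_mul] at hfac
        calc h u * (u * (u + θ) ^ (-1:ℝ) * (u + θ) ^ σ) ≤ h u * τ :=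
              mul_le_mul_of_nonneg_left hfac (hhnn u hu)
          _ = τ * h u := mul_comm _ _
      · -- g u ≤ indicator
        push_neg at hcase
        have hind : (Ioi T).indicator φ u = φ u := indicator_of_mem hcase _
        rw [hind]
        have h1 : g u ≤ φ u := by
          simp only [hg, hφ]
          have hup : u ^ n ≤ (u + θ) ^ (n:ℕ) := pow_le_pow_left₀ hu0.le (by linarith) n
          have hexp2 : (u + θ) ^ (q + σ - 1)
              = (u + θ) ^ (n:ℕ) * (u + θ) ^ (((k:ℝ) + 1) * σ - ((n:ℝ) + 1)) := by
            rw [← Real.rpow_natCast (u+θ) n, ← Real.rpow_add huθ]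
            congr 1
            simp only [hqdef]
            ring
          rw [hexp2]
          apply mul_le_mul_of_nonneg_right _ (hEpos u).le
          apply mul_le_mul_of_nonneg_right hup
          positivity
        have h2 : 0 ≤ τ * h u := mul_nonneg hτ0.le (hhnn u hu)
        linarith
    calc Nint a θ σ n k = ∫ u in Ioi (0:ℝ), g u := rfl
      _ ≤ ∫ u in Ioi (0:ℝ), (τ * h u + (Ioi T).indicator φ u) :=
          integral_mono_of_nonneg hgnn hMint hle
      _ = τ * (∫ u in Ioi (0:ℝ), h u) + ∫ u in Ioi (0:ℝ), (Ioi T).indicator φ u := by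
          rw [integral_add (hhint.const_mul τ)
            ((hφint.integrable_indicator measurableSet_Ioi)).integrableOn,
            integral_const_mul]
      _ = τ * D + ∫ u in Ioi T, φ u := by
          rw [integral_indicator measurableSet_Ioi,
            Measure.restrict_restrict measurableSet_Ioi,
            inter_eq_left.mpr (Ioi_subset_Ioi hT0), hDh]
  -- Step 3 : integration by parts
  have hTail : a * (∫ u in Ioi T, φ u) = q * B + (T + θ) ^ q * E T := by
    have h := aux_ibp (θ := θ) ha hθ hσ hσ1 hT0 hq
    simpa only [hφ, hψ, hE, hBdef] using h
  -- Step 4 : B ≤ exp θ * D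
  have hψnn : 0 ≤ᵐ[volume.restrict (Ioi T)] ψ := by
    filter_upwards [ae_restrict_mem measurableSet_Ioi] with u hu
    have : (0:ℝ) < u + θ := by have : T < u := hu; linarith
    simp only [hψ]
    positivity
  have hBD : B ≤ Real.exp θ * D := by
    have hpt : ∀ u ∈ Ioi T, ψ u ≤ Real.exp θ * h u := by
      intro u hu
      have hTu : T < u := hu
      have hu0 : (0:ℝ) < u := lt_of_lt_of_le (by linarith) hTu.le
      have huθ : (0:ℝ) < u + θ := by linarith
      have e1 : (u + θ) ^ ((n:ℝ) - 1) = (u + θ) ^ ((n-1 : ℕ) : ℕ) := by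
        rw [← Real.rpow_natCast (u + θ) (n-1)]
        congr 1
        have : ((n - 1 : ℕ) : ℝ) = (n:ℝ) - 1 := by
          have := Nat.cast_sub hn (R := ℝ)
          simpa using this
        rw [this]
      have e2 : u + θ ≤ u * Real.exp (θ / u) := by
        have h2 : θ / u + 1 ≤ Real.exp (θ / u) := Real.add_one_le_exp _
        have h3 : u * (θ / u + 1) = u + θ := by field_simp; ring
        nlinarith [mul_le_mul_of_nonneg_left h2 hu0.le]
      have e3 : (u + θ) ^ (n-1 : ℕ) ≤ (u * Real.exp (θ / u)) ^ (n-1 : ℕ) :=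
        pow_le_pow_left₀ (by linarith) e2 _
      have e4 : (u * Real.exp (θ / u)) ^ (n-1:ℕ)
          = u ^ (n-1:ℕ) * Real.exp (((n-1:ℕ):ℝ) * (θ / u)) := by
        rw [mul_pow, Real.exp_nat_mul]
      have e5 : ((n-1:ℕ):ℝ) * (θ / u) ≤ θ := by
        have hnu : ((n-1:ℕ):ℝ) ≤ u := by
          have : ((n-1:ℕ):ℝ) ≤ (n:ℝ) := by exact_mod_cast Nat.sub_le n 1
          linarith
        have : ((n-1:ℕ):ℝ) * (θ / u) ≤ u * (θ / u) :=
          mul_le_mul_of_nonneg_right hnu (by positivity)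
        rwa [mul_div_cancel₀ θ hu0.ne'] at this
      have e6 : (u + θ) ^ ((n:ℝ) - 1) ≤ Real.exp θ * u ^ (n-1:ℕ) := by
        rw [e1]
        calc ((u + θ) ^ (n-1:ℕ) : ℝ) ≤ u ^ (n-1:ℕ) * Real.exp (((n-1:ℕ):ℝ) * (θ / u)) := by
              rw [← e4]; exact e3
          _ ≤ u ^ (n-1:ℕ) * Real.exp θ := by
              apply mul_le_mul_of_nonneg_left (Real.exp_le_exp.mpr e5) (by positivity)
          _ = Real.exp θ * u ^ (n-1:ℕ) := mul_comm _ _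
      have e7 : (u + θ) ^ (q - 1) = (u + θ) ^ (q - (n:ℝ)) * (u + θ) ^ ((n:ℝ) - 1) := by
        rw [← Real.rpow_add huθ]
        congr 1
        ring
      simp only [hψ, hh]
      rw [e7]
      have e8 : (u + θ) ^ (q - (n:ℝ)) * (u + θ) ^ ((n:ℝ) - 1)
          ≤ (u + θ) ^ (q - (n:ℝ)) * (Real.exp θ * u ^ (n-1:ℕ)) :=
        mul_le_mul_of_nonneg_left e6 (by positivity)
      have e9 : (u + θ) ^ (q - (n:ℝ)) * (Real.exp θ * u ^ (n-1:ℕ)) * E u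
          = Real.exp θ * (u ^ (n-1) * (u + θ) ^ ((k:ℝ) * σ - (n:ℝ)) * E u) := by
        simp only [hqdef]
        ring
      calc (u + θ) ^ (q - (n:ℝ)) * (u + θ) ^ ((n:ℝ) - 1) * E u
          ≤ (u + θ) ^ (q - (n:ℝ)) * (Real.exp θ * u ^ (n-1:ℕ)) * E u :=
            mul_le_mul_of_nonneg_right e8 (hEpos u).le
        _ = Real.exp θ * (u ^ (n-1) * (u + θ) ^ ((k:ℝ) * σ - (n:ℝ)) * E u) := e9
    calc B ≤ ∫ u in Ioi T, Real.exp θ * h u :=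
          setIntegral_mono_on hψint
            ((hhint.mono_set (Ioi_subset_Ioi hT0)).const_mul _) measurableSet_Ioi hpt
      _ = Real.exp θ * ∫ u in Ioi T, h u := integral_const_mul _ _
      _ ≤ Real.exp θ * ∫ u in Ioi 0, h u := by
          apply mul_le_mul_of_nonneg_left _ (Real.exp_pos θ).le
          apply setIntegral_mono_set hhint
          · filter_upwards [ae_restrict_mem measurableSet_Ioi] with u hu using hhnn u hu
          · exact (Ioi_subset_Ioi hT0).eventuallyLE
      _ = Real.exp θ * D := by rw [hDh]
  -- Step 5 : boundary term
  have hbd : (T + θ) ^ q * E T ≤ σ * 2 ^ (1/σ) * Real.exp (a/σ) * τ * B := by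
    set S : ℝ := (τ + 1) ^ (1/σ) - θ with hSdef
    have hSθeq : S + θ = (τ + 1) ^ (1/σ) := by simp only [hSdef]; ring
    have hSθpos : 0 < S + θ := by rw [hSθeq]; positivity
    have hTθτ : T + θ = τ ^ (1/σ) := by
      rw [hτdef, ← Real.rpow_mul hTθ.le, mul_one_div, div_self hσ.ne', Real.rpow_one]
    have hστ : (S + θ) ^ σ = τ + 1 := by
      rw [hSθeq, ← Real.rpow_mul (by positivity), one_div, inv_mul_cancel₀ hσ.ne',
        Real.rpow_one]
    have hTS : T < S := by
      have h1 : τ ^ (1/σ) < (τ + 1) ^ (1/σ) :=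
        Real.rpow_lt_rpow hτ0.le (lt_add_one τ) (by positivity)
      rw [← hTθτ, ← hSθeq] at h1
      linarith
    have hgap : (1/σ) * (τ ^ (1/σ) / τ) ≤ S - T := by
      have h0τ : (0:ℝ) ≤ 1/τ := by positivity
      have h1τ : (-1:ℝ) ≤ 1/τ := by linarith
      have hb : 1 + (1/σ) * (1/τ) ≤ (1 + 1/τ) ^ (1/σ) :=
        one_add_mul_self_le_rpow_one_add h1τ
          (by rw [le_div_iff₀ hσ, one_mul]; exact hσ1.le)
      have hb2 : τ ^ (1/σ) * (1 + (1/σ) * (1/τ)) ≤ (τ + 1) ^ (1/σ) := by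
        calc τ ^ (1/σ) * (1 + (1/σ) * (1/τ))
            ≤ τ ^ (1/σ) * (1 + 1/τ) ^ (1/σ) :=
              mul_le_mul_of_nonneg_left hb (by positivity)
          _ = (τ * (1 + 1/τ)) ^ (1/σ) := (Real.mul_rpow hτ0.le (by positivity)).symm
          _ = (τ + 1) ^ (1/σ) := by
              congr 1
              field_simp
      have hexp : τ ^ (1/σ) * (1 + (1/σ) * (1/τ)) = τ ^ (1/σ) + (1/σ) * (τ ^ (1/σ) / τ) := by
        field_simp
      rw [hexp] at hb2
      have := hTθτ
      have := hSθeq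
      linarith
    have hES : E S = E T * Real.exp (-(a/σ)) := by
      have hET : E T = Real.exp (-(a/σ) * τ) := by rw [hE, hτdef]
      have hES' : E S = Real.exp (-(a/σ) * (τ + 1)) := by
        rw [hE]
        show Real.exp (-(a/σ) * (S + θ) ^ σ) = _
        rw [hστ]
      rw [hET, hES', ← Real.exp_add]
      congr 1
      ring
    set m0 : ℝ := (T + θ) ^ q * (S + θ)⁻¹ * E S with hm0def
    have hm0 : 0 ≤ m0 := by
      simp only [hm0def]
      positivity
    have hlow : (S - T) * m0 ≤ B := by
      have hpt2 : ∀ u ∈ Ioc T S, m0 ≤ ψ u := by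
        intro u hu
        have hTu : T < u := hu.1
        have huS : u ≤ S := hu.2
        have huθ : (0:ℝ) < u + θ := by linarith
        have b1 : (T + θ) ^ q ≤ (u + θ) ^ q :=
          Real.rpow_le_rpow hTθ.le (by linarith) hq.le
        have b2 : (S + θ)⁻¹ ≤ (u + θ)⁻¹ := by
          apply inv_anti₀ huθ
          linarith
        have b3 : E S ≤ E u := by
          simp only [hE]
          apply Real.exp_le_exp.mpr
          have : (u + θ) ^ σ ≤ (S + θ) ^ σ :=
            Real.rpow_le_rpow huθ.le (by linarith) hσ.le
          nlinarith
        have e10 : ψ u = (u + θ) ^ q * (u + θ)⁻¹ * E u := by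
          simp only [hψ]
          rw [show q - 1 = q + (-1 : ℝ) by ring, Real.rpow_add huθ, Real.rpow_neg_one]
        rw [e10, hm0def]
        apply mul_le_mul _ b3 (hEpos S).le (by positivity)
        apply mul_le_mul b1 b2 (by positivity) (by positivity)
      calc (S - T) * m0 = m0 * (volume (Ioc T S)).toReal := by
            rw [Real.volume_Ioc, ENNReal.toReal_ofReal (by linarith)]
            ring
        _ ≤ ∫ u in Ioc T S, ψ u :=
            setIntegral_ge_of_const_le_real measurableSet_Ioc
              (by rw [Real.volume_Ioc]; exact ENNReal.ofReal_ne_top) hpt2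
              (hψint.mono_set Ioc_subset_Ioi_self)
        _ ≤ B := setIntegral_mono_set hψint hψnn Ioc_subset_Ioi_self.eventuallyLE
    have h2τ : S + θ ≤ 2 ^ (1/σ) * τ ^ (1/σ) := by
      rw [hSθeq, ← Real.mul_rpow (by norm_num) hτ0.le]
      exact Real.rpow_le_rpow (by positivity) (by linarith) (by positivity)
    have hfin : S + θ ≤ σ * (2 ^ (1/σ) * τ) * (S - T) := by
      have h3 : σ * (2 ^ (1/σ) * τ) * ((1/σ) * (τ ^ (1/σ) / τ)) = 2 ^ (1/σ) * τ ^ (1/σ) := by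
        field_simp
      calc S + θ ≤ 2 ^ (1/σ) * τ ^ (1/σ) := h2τ
        _ = σ * (2 ^ (1/σ) * τ) * ((1/σ) * (τ ^ (1/σ) / τ)) := h3.symm
        _ ≤ σ * (2 ^ (1/σ) * τ) * (S - T) :=
            mul_le_mul_of_nonneg_left hgap (by positivity)
    have hcoef : 1 ≤ σ * (2 ^ (1/σ) * τ) * (S - T) * (S + θ)⁻¹ := by
      rw [← div_eq_mul_inv, le_div_iff₀ hSθpos, one_mul]
      exact hfin
    have hPnn : 0 ≤ (T + θ) ^ q * E T := by positivity
    calc (T + θ) ^ q * E T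
        ≤ (σ * (2 ^ (1/σ) * τ) * (S - T) * (S + θ)⁻¹) * ((T + θ) ^ q * E T) :=
          le_mul_of_one_le_left hPnn hcoef
      _ = σ * 2 ^ (1/σ) * Real.exp (a/σ) * τ * ((S - T) * m0) := by
          rw [hm0def, hES, Real.exp_neg]
          field_simp
      _ ≤ σ * 2 ^ (1/σ) * Real.exp (a/σ) * τ * B :=
          mul_le_mul_of_nonneg_left hlow (by positivity)
  -- Step 6 : assemble
  have f1 : a * Nint a θ σ n k ≤ a * τ * D + a * ∫ u in Ioi T, φ u := by
    have := mul_le_mul_of_nonneg_left step2 ha.le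
    nlinarith [this]
  have f3 : q * B ≤ q * (Real.exp θ * D) := mul_le_mul_of_nonneg_left hBD hq.le
  have f5 : σ * 2 ^ (1/σ) * Real.exp (a/σ) * τ * B
      ≤ σ * 2 ^ (1/σ) * Real.exp (a/σ) * τ * (Real.exp θ * D) :=
    mul_le_mul_of_nonneg_left hBD (by positivity)
  have hqk : q * (Real.exp θ * D) = σ * (k:ℝ) * Real.exp θ * D := by
    rw [hqdef]; ring
  have hrhs : ((a + σ * 2 ^ (1/σ) * Real.exp (a/σ) * Real.exp θ) * ((n:ℝ) + θ) ^ σ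
        + σ * (k:ℝ) * Real.exp θ) * D
      = a * τ * D + σ * 2 ^ (1/σ) * Real.exp (a/σ) * τ * (Real.exp θ * D)
        + σ * (k:ℝ) * Real.exp θ * D := by
    rw [hτdef, hTdef]
    ring
  rw [hrhs]
  linarith [f1, hTail, f3, f5, hqk, hbd]

/-- If `1 ≤ k_n ≤ n` and `k_n/n → 0`, then `(a/n)·N(n,k_n)/D(n,k_n) → 0`. -/
theorem stmt_9 (a θ σ : ℝ) (ha : 0 < a) (hθ : 0 < θ) (hσ : σ ∈ Set.Ioo (0:ℝ) 1)
    (k : ℕ → ℕ) (hk : ∀ n : ℕ, 1 ≤ n → 1 ≤ k n ∧ k n ≤ n)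
    (hk0 : Tendsto (fun n : ℕ => (k n : ℝ) / n) atTop (nhds 0)) :
    Tendsto (fun n : ℕ => (a / n) * (Nint a θ σ n (k n) / Dint a θ σ n (k n)))
      atTop (nhds 0) := by
  obtain ⟨hσ0, hσ1⟩ := hσ
  set C1 : ℝ := a + σ * 2 ^ (1/σ) * Real.exp (a/σ) * Real.exp θ with hC1
  have hC1pos : 0 < C1 := by rw [hC1]; positivity
  -- the majorant sequence
  set G : ℕ → ℝ := fun n => C1 * (((n:ℝ) + θ) ^ σ / n)
    + (σ * Real.exp θ) * ((k n : ℝ) / n) with hG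
  have hNnn : ∀ n : ℕ, 0 ≤ Nint a θ σ n (k n) := by
    intro n
    apply setIntegral_nonneg measurableSet_Ioi
    intro u hu
    have hu0 : (0:ℝ) < u := hu
    have : (0:ℝ) < u + θ := by linarith
    positivity
  have hnonneg : ∀ n : ℕ,
      0 ≤ (a / n) * (Nint a θ σ n (k n) / Dint a θ σ n (k n)) := by
    intro n
    have hD := aux_Dpos ha hθ hσ0 hσ1 n (k n)
    have := hNnn n
    positivity
  have hbound : ∀ n : ℕ, 1 ≤ n →
      (a / n) * (Nint a θ σ n (k n) / Dint a θ σ n (k n)) ≤ G n := by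
    intro n hn
    have hD := aux_Dpos ha hθ hσ0 hσ1 n (k n)
    have hN := hNnn n
    have hn' : (0:ℝ) < n := by exact_mod_cast hn
    have key : a * Nint a θ σ n (k n)
        ≤ (C1 * ((n:ℝ) + θ) ^ σ + σ * (k n : ℝ) * Real.exp θ) * Dint a θ σ n (k n) := by
      rw [hC1]
      exact aux_key ha hθ hσ0 hσ1 n (k n) hn (hk n hn).1 (hk n hn).2
    have hGn : G n = (C1 * ((n:ℝ) + θ) ^ σ + σ * (k n : ℝ) * Real.exp θ) / n := by
      rw [hG]
      field_simp
    rw [hGn, div_mul_div_comm, div_le_div_iff₀ (by positivity) hn']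
    nlinarith [mul_le_mul_of_nonneg_right key hn'.le]
  -- limit of the majorant
  have ht1 : Tendsto (fun n : ℕ => ((n:ℝ) + θ) ^ σ / n) atTop (nhds 0) := by
    have hlim : Tendsto (fun n : ℕ => 2 * (n:ℝ) ^ (σ - 1)) atTop (nhds 0) := by
      have h0 : Tendsto (fun x : ℝ => x ^ (-(1 - σ))) atTop (nhds 0) :=
        tendsto_rpow_neg_atTop (by linarith)
      have h1 := (h0.comp tendsto_natCast_atTop_atTop).const_mul 2
      rw [mul_zero] at h1
      refine h1.congr fun n => ?_
      simp only [Function.comp]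
      norm_num
    apply squeeze_zero' ?_ ?_ hlim
    · filter_upwards [eventually_ge_atTop 1] with n hn
      have hn' : (0:ℝ) < n := by exact_mod_cast hn
      positivity
    · have hev : ∀ᶠ n : ℕ in atTop, θ ≤ (n:ℝ) ∧ 1 ≤ (n:ℝ) := by
        filter_upwards [tendsto_natCast_atTop_atTop.eventually_ge_atTop θ,
          tendsto_natCast_atTop_atTop.eventually_ge_atTop (1:ℝ)] with n h1 h2
        exact ⟨h1, h2⟩
      filter_upwards [hev] with n hn
      obtain ⟨hθn, h1n⟩ := hn
      have hn' : (0:ℝ) < n := by linarith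
      have hb1 : ((n:ℝ) + θ) ^ σ ≤ 2 * (n:ℝ) ^ σ := by
        calc ((n:ℝ) + θ) ^ σ ≤ (2 * n) ^ σ :=
              Real.rpow_le_rpow (by positivity) (by linarith) hσ0.le
          _ = 2 ^ σ * (n:ℝ) ^ σ := Real.mul_rpow (by norm_num) hn'.le
          _ ≤ 2 * (n:ℝ) ^ σ := by
              apply mul_le_mul_of_nonneg_right _ (by positivity)
              calc (2:ℝ) ^ σ ≤ 2 ^ (1:ℝ) :=
                    Real.rpow_le_rpow_of_exponent_le (by norm_num) hσ1.le
                _ = 2 := Real.rpow_one 2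
      calc ((n:ℝ) + θ) ^ σ / n ≤ 2 * (n:ℝ) ^ σ / n := by gcongr
        _ = 2 * (n:ℝ) ^ (σ - 1) := by
            rw [Real.rpow_sub hn', Real.rpow_one, mul_div_assoc]
  have hGlim : Tendsto G atTop (nhds 0) := by
    have h1 := ht1.const_mul C1
    have h2 := hk0.const_mul (σ * Real.exp θ)
    have h3 := h1.add h2
    rw [mul_zero, mul_zero, add_zero] at h3
    exact h3
  apply squeeze_zero' ?_ ?_ hGlim
  · exact Eventually.of_forall hnonneg
  · filter_upwards [eventually_ge_atTop 1] with n hn using hbound n hn
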